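/- Let C and D be abelian categories, p^* : C → D an exact and faithful functor, p_* : D → C an exact functor, and G a finite group of order d acting on D by exact autoequivalences g^*, with natural isomorphisms p_*∘p^* ≅ (−)^{⊕d} and p^*∘p_* ≅ ⊕_{g∈G} g^*. Let Z be a stability function on D with the Harder–Narasimhan property such that for every φ ∈ (0,1] the class of Z-semistable objects of phase φ is preserved by every g^*. Then Z∘p^* is a stability function on C, and a nonzero object E of C is (Z∘p^*)-semistable if and only if p^*E is Z-semistable; in that case the phase of E with respect to Z∘p^* equals the phase of p^*E with respect to Z. -/

import Mathlib

open CategoryTheory Limits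

noncomputable section

namespace StabilityPaper

universe v u v₂ u₂

section AbelianStability

variable {A : Type u} [Category.{v} A] [Abelian A]

/-- A stability function on an abelian category: a function on objects which is
additive on short exact sequences (equivalently, a group homomorphism `K(A) → ℂ`)
such that every nonzero object is sent into the semi-closed upper half plane
`H = {r · exp(iπφ) : r > 0, 0 < φ ≤ 1}`. -/
def IsStabilityFunction (Z : A → ℂ) : Prop :=
  (∀ S : ShortComplex A, S.ShortExact → Z S.X₂ = Z S.X₁ + Z S.X₃) ∧
  (∀ E : A, ¬ IsZero E → ∃ r φ : ℝ, 0 < r ∧ 0 < φ ∧ φ ≤ 1 ∧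
    Z E = (r : ℂ) * Complex.exp ((Real.pi : ℂ) * φ * Complex.I))

/-- The phase `φ(E) = (1/π) arg Z(E) ∈ (0, 1]` of a nonzero object. -/
def phase (Z : A → ℂ) (E : A) : ℝ := (Z E).arg / Real.pi

/-- A nonzero object `E` is `Z`-semistable if `φ(X) ≤ φ(E)` for every nonzero
subobject `X ⊆ E`. -/
def IsSemistable (Z : A → ℂ) (E : A) : Prop :=
  ¬ IsZero E ∧ ∀ (X : A) (f : X ⟶ E), Mono f → ¬ IsZero X → phase Z X ≤ phase Z E

/-- A Harder–Narasimhan filtration `0 = E₀ ⊂ E₁ ⊂ ⋯ ⊂ Eₙ = E` with nonzero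
`Z`-semistable quotients of strictly decreasing phases. -/
structure HNFiltAb (Z : A → ℂ) (E : A) where
  n : ℕ
  npos : 0 < n
  Fil : Fin (n + 1) → A
  f : ∀ i : Fin n, Fil i.castSucc ⟶ Fil i.succ
  mono : ∀ i, Mono (f i)
  fil_zero : IsZero (Fil 0)
  fil_last : Nonempty (Fil (Fin.last n) ≅ E)
  quot_ne : ∀ i, ¬ IsZero (cokernel (f i))
  quot_ss : ∀ i, IsSemistable Z (cokernel (f i))
  quot_anti : StrictAnti fun i => phase Z (cokernel (f i))

/-- The Harder–Narasimhan property for a stability function. -/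
def HNProperty (Z : A → ℂ) : Prop := ∀ E : A, ¬ IsZero E → Nonempty (HNFiltAb Z E)

/-- The chain conditions of Bridgeland: no infinite chains of subobjects with
strictly increasing phases, and no infinite chains of quotients with strictly
decreasing phases. -/
def ChainConditions (Z : A → ℂ) : Prop :=
  (¬ ∃ (E : ℕ → A) (f : ∀ n : ℕ, E (n + 1) ⟶ E n),
    (∀ n, Mono (f n)) ∧ (∀ n, ¬ IsZero (E n)) ∧
      ∀ n, phase Z (E n) < phase Z (E (n + 1))) ∧
  (¬ ∃ (E : ℕ → A) (f : ∀ n : ℕ, E n ⟶ E (n + 1)),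
    (∀ n, Epi (f n)) ∧ (∀ n, ¬ IsZero (E n)) ∧
      ∀ n, phase Z (E (n + 1)) < phase Z (E n))

end AbelianStability

section GroupAction

variable {C : Type u} [Category.{v} C] {G : Type} [Group G]

/-- The cocycle condition for a `G`-linearization `lam` of an object `X`. -/
def CocycleLin (gst : G → C ⥤ C) (actMul : ∀ g h : G, gst h ⋙ gst g ≅ gst (g * h))
    (X : C) (lam : ∀ g : G, X ≅ (gst g).obj X) : Prop :=
  ∀ g h : G, (lam (g * h)).hom =
    (lam g).hom ≫ (gst g).map ((lam h).hom) ≫ (actMul g h).hom.app X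

/-- Compatibility of a morphism with `G`-linearizations of its source and target. -/
def LinHomCompat (gst : G → C ⥤ C) {X Y : C}
    (lamX : ∀ g : G, X ≅ (gst g).obj X) (lamY : ∀ g : G, Y ≅ (gst g).obj Y)
    (f : X ⟶ Y) : Prop :=
  ∀ g : G, f ≫ (lamY g).hom = (lamX g).hom ≫ (gst g).map f

end GroupAction

section Descent

variable {C₁ : Type u} [Category.{v} C₁] {C₂ : Type u₂} [Category.{v₂} C₂]
  {G : Type} [Group G]

/-- The descent hypothesis: the natural functor from `C` to the category of
`G`-equivariant objects of `D`, sending `E` to `p^* E` with its canonical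
linearization, is an equivalence of categories (expressed as: it is fully faithful
and essentially surjective). -/
def GaloisDescent (pstar : C₁ ⥤ C₂) (gst : G → C₂ ⥤ C₂)
    (actMul : ∀ g h : G, gst h ⋙ gst g ≅ gst (g * h))
    (pIso : ∀ g : G, pstar ≅ pstar ⋙ gst g) : Prop :=
  (∀ (E F : C₁) (f' : pstar.obj E ⟶ pstar.obj F),
      LinHomCompat gst (fun g => (pIso g).app E) (fun g => (pIso g).app F) f' →
      ∃! f : E ⟶ F, pstar.map f = f') ∧
  (∀ (X : C₂) (lam : ∀ g : G, X ≅ (gst g).obj X), CocycleLin gst actMul X lam →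
      ∃ (E : C₁) (u : pstar.obj E ≅ X),
        LinHomCompat gst (fun g => (pIso g).app E) lam u.hom)

end Descent

attribute [local instance] CategoryTheory.Limits.HasFiniteBiproducts.of_hasFiniteProducts

section Aux


/-- cone membership: zero or argument in `(0, a]`. -/
def Qc (a : ℝ) (w : ℂ) : Prop := w = 0 ∨ (0 < w.arg ∧ w.arg ≤ a)

/-- linearized version of `Qc`. -/
def Rc (a : ℝ) (w : ℂ) : Prop :=
  0 ≤ w.im ∧ (w.im = 0 → w.re ≤ 0) ∧ (w * Complex.exp (-(a:ℂ) * Complex.I)).im ≤ 0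

lemma im_mul_exp_neg (a : ℝ) (w : ℂ) :
    (w * Complex.exp (-(a:ℂ) * Complex.I)).im = ‖w‖ * Real.sin (w.arg - a) := by
  conv_lhs => rw [← Complex.norm_mul_exp_arg_mul_I w]
  rw [mul_assoc, ← Complex.exp_add]
  have h : (w.arg : ℂ) * Complex.I + -(a:ℂ) * Complex.I = ((w.arg - a : ℝ) : ℂ) * Complex.I := by
    push_cast; ring
  rw [h, Complex.mul_im, Complex.exp_ofReal_mul_I_im, Complex.exp_ofReal_mul_I_re]
  simp

lemma Rc_zero (a : ℝ) : Rc a 0 := by simp [Rc]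

lemma Rc_add {a : ℝ} {w₁ w₂ : ℂ} (h₁ : Rc a w₁) (h₂ : Rc a w₂) : Rc a (w₁ + w₂) := by
  obtain ⟨a1, b1, c1⟩ := h₁
  obtain ⟨a2, b2, c2⟩ := h₂
  refine ⟨by simpa using add_nonneg a1 a2, ?_, ?_⟩
  · intro h
    simp only [Complex.add_im] at h
    have i1 : w₁.im = 0 := le_antisymm (by linarith) a1
    have i2 : w₂.im = 0 := le_antisymm (by linarith) a2
    simpa using add_nonpos (b1 i1) (b2 i2)
  · rw [add_mul]
    simpa using add_nonpos c1 c2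

lemma Rc_of_Qc {a : ℝ} (ha : 0 < a) (hπ : a ≤ Real.pi) {w : ℂ} (h : Qc a w) : Rc a w := by
  rcases h with rfl | ⟨h1, h2⟩
  · exact Rc_zero a
  refine ⟨Complex.arg_nonneg_iff.mp h1.le, ?_, ?_⟩
  · intro him
    by_contra hre
    push_neg at hre
    have : w.arg = 0 := Complex.arg_eq_zero_iff.mpr ⟨hre.le, him⟩
    exact h1.ne' this
  · rw [im_mul_exp_neg]
    apply mul_nonpos_of_nonneg_of_nonpos (norm_nonneg w)
    apply Real.sin_nonpos_of_nonpos_of_neg_pi_le (by linarith)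
    linarith [Complex.arg_le_pi w]

lemma Qc_of_Rc {a : ℝ} (ha : 0 < a) (hπ : a ≤ Real.pi) {w : ℂ} (hw : w ≠ 0) (h : Rc a w) :
    0 < w.arg ∧ w.arg ≤ a := by
  obtain ⟨h1, h2, h3⟩ := h
  have hnn : 0 ≤ w.arg := Complex.arg_nonneg_iff.mpr h1
  have hne : w.arg ≠ 0 := by
    intro h0
    obtain ⟨hre, him⟩ := Complex.arg_eq_zero_iff.mp h0
    exact hw (Complex.ext (le_antisymm (h2 him) hre) him)
  refine ⟨hnn.lt_of_ne' hne, ?_⟩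
  by_contra hgt
  push_neg at hgt
  rw [im_mul_exp_neg] at h3
  have habs : 0 < ‖w‖ := norm_pos_iff.mpr hw
  have hsin : 0 < Real.sin (w.arg - a) := by
    apply Real.sin_pos_of_pos_of_lt_pi (by linarith)
    linarith [Complex.arg_le_pi w]
  nlinarith

lemma Qc_add {a : ℝ} (ha : 0 < a) (hπ : a ≤ Real.pi) {w₁ w₂ : ℂ} (h₁ : Qc a w₁) (h₂ : Qc a w₂) :
    Qc a (w₁ + w₂) := by
  by_cases h : w₁ + w₂ = 0
  · exact Or.inl h
  · exact Or.inr (Qc_of_Rc ha hπ h (Rc_add (Rc_of_Qc ha hπ h₁) (Rc_of_Qc ha hπ h₂)))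

lemma arg_sum {ι : Type} [Fintype ι] [Nonempty ι] {θ : ℝ} (hθ : θ ∈ Set.Ioc (-Real.pi) Real.pi)
    (z : ι → ℂ) (hz : ∀ i, z i ≠ 0) (hargs : ∀ i, (z i).arg = θ) :
    (∑ i, z i).arg = θ := by
  have hzeq : ∀ i, z i = (‖z i‖ : ℂ) * Complex.exp ((θ:ℂ) * Complex.I) := by
    intro i
    conv_lhs => rw [← Complex.norm_mul_exp_arg_mul_I (z i)]
    rw [hargs i]
  have : (∑ i, z i) = ((∑ i, ‖z i‖ : ℝ) : ℂ) * Complex.exp ((θ:ℂ) * Complex.I) := by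
    rw [Finset.sum_congr rfl fun i _ => hzeq i]
    push_cast
    rw [Finset.sum_mul]
  rw [this, Complex.arg_real_mul _ (Finset.sum_pos (fun i _ => norm_pos_iff.mpr (hz i)) Finset.univ_nonempty)]
  rw [Complex.exp_mul_I]
  exact Complex.arg_cos_add_sin_mul_I hθ



attribute [local instance] CategoryTheory.Limits.HasFiniteBiproducts.of_hasFiniteProducts

variable {A : Type u} [Category.{v} A] [Abelian A]

lemma isZero_component {ι : Type} [Fintype ι] (f : ι → A) (h : IsZero (⨁ f)) (i : ι) :
    IsZero (f i) := by
  rw [IsZero.iff_id_eq_zero, ← biproduct.ι_π_self f i]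
  have hz : biproduct.ι f i = 0 := h.eq_of_tgt _ _
  rw [hz, zero_comp]

lemma isZero_of_mono_into_zero {X B : A} (u : X ⟶ B) [Mono u] (hB : IsZero B) : IsZero X := by
  rw [IsZero.iff_id_eq_zero]
  have h : 𝟙 X ≫ u = 0 ≫ u := by rw [hB.eq_of_tgt u 0]; simp
  exact (cancel_mono u).mp h

section Zadd
variable {Z : A → ℂ}
variable (hadd : ∀ S : ShortComplex A, S.ShortExact → Z S.X₂ = Z S.X₁ + Z S.X₃)
include hadd

lemma Z_isZero {O : A} (hO : IsZero O) : Z O = 0 := by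
  have hz : 𝟙 O ≫ 𝟙 O = 0 := hO.eq_of_src _ _
  have hS : (ShortComplex.mk (𝟙 O) (𝟙 O) hz).ShortExact :=
    { exact := ShortComplex.exact_of_isZero_X₂ _ hO }
  have := hadd _ hS
  dsimp at this
  linear_combination -this

lemma Z_mono {X Y : A} (f : X ⟶ Y) [Mono f] : Z Y = Z X + Z (cokernel f) := by
  have hS : (ShortComplex.mk f (cokernel.π f) (cokernel.condition f)).ShortExact :=
    { exact := ShortComplex.exact_of_g_is_cokernel _ (cokernelIsCokernel f) }
  exact hadd _ hS

lemma Z_iso {X Y : A} (e : X ≅ Y) : Z X = Z Y := by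
  have h := Z_mono hadd e.hom
  have hz : IsZero (cokernel e.hom) := by
    rw [IsZero.iff_id_eq_zero]
    have : cokernel.π e.hom = 0 := cokernel.π_of_epi _
    rw [← cancel_epi (cokernel.π e.hom), this]
    simp
  rw [Z_isZero hadd hz] at h
  rw [h, add_zero]

omit hadd in
/-- the short complex `⨁ (f ∘ some) ⟶ ⨁ f ⟶ f none` for a biproduct over `Option ι`. -/
lemma optionSES {ι : Type} [Fintype ι] (f : Option ι → A) :
    ∃ S : ShortComplex A, S.ShortExact ∧ S.X₁ = (⨁ fun i => f (some i)) ∧ S.X₂ = (⨁ f) ∧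
      S.X₃ = f none := by
  have hzero : (biproduct.desc fun i => biproduct.ι f (some i) :
      (⨁ fun i => f (some i)) ⟶ ⨁ f) ≫ biproduct.π f none = 0 := by
    ext i
    simp [biproduct.ι_π_ne f (Option.some_ne_none i)]
  refine ⟨ShortComplex.mk _ _ hzero, ?_, rfl, rfl, rfl⟩
  have spl : (ShortComplex.mk _ _ hzero).Splitting :=
    { r := biproduct.lift fun i => biproduct.π f (some i)
      s := biproduct.ι f none
      f_r := by
        ext i
        rename_i j
        simp only [Category.assoc, biproduct.ι_desc_assoc, biproduct.lift_π, Category.id_comp,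
          Category.comp_id]
        by_cases h : j = i
        · subst h; simp
        · rw [biproduct.ι_π_ne _ (show some j ≠ some i by simpa using h),
            biproduct.ι_π_ne _ h]
      s_g := by simp
      id := by
        dsimp
        rw [biproduct.lift_desc]
        rw [← biproduct.total (f := f), Fintype.sum_option]
        abel }
  exact spl.shortExact

lemma Z_biproduct_fin : ∀ (n : ℕ) (f : Fin n → A), Z (⨁ f) = ∑ i, Z (f i) := by
  intro n
  induction n with
  | zero =>
      intro f
      have hz : IsZero (⨁ f) := by
        rw [IsZero.iff_id_eq_zero]
        apply biproduct.hom_ext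
        intro i
        exact i.elim0
      rw [Z_isZero hadd hz]
      simp
  | succ n ih =>
      intro f
      set e := finSuccEquiv n with he
      have hiso : (⨁ f) ≅ ⨁ (fun o : Option (Fin n) => f (e.symm o)) :=
        biproduct.whiskerEquiv e fun i => eqToIso (congrArg f (e.symm_apply_apply i))
      rw [Z_iso hadd hiso]
      obtain ⟨S, hS, h1, h2, h3⟩ := optionSES (A := A) (fun o : Option (Fin n) => f (e.symm o))
      have hsum := hadd S hS
      rw [h1, h2, h3] at hsum
      rw [hsum, ih _]
      rw [← Equiv.sum_comp e.symm (fun i => Z (f i)), Fintype.sum_option]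
      ring

lemma Z_biproduct {ι : Type} [Fintype ι] (f : ι → A) : Z (⨁ f) = ∑ i, Z (f i) := by
  set e := Fintype.equivFin ι with he
  have hiso : (⨁ f) ≅ ⨁ (fun j : Fin (Fintype.card ι) => f (e.symm j)) :=
    biproduct.whiskerEquiv e fun i => eqToIso (congrArg f (e.symm_apply_apply i))
  rw [Z_iso hadd hiso, Z_biproduct_fin hadd _ _, Equiv.sum_comp e.symm (fun i => Z (f i))]

end Zadd

section Stab
variable {Z : A → ℂ}
variable (hadd : ∀ S : ShortComplex A, S.ShortExact → Z S.X₂ = Z S.X₁ + Z S.X₃)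
variable (hH : ∀ E : A, ¬ IsZero E → ∃ r φ : ℝ, 0 < r ∧ 0 < φ ∧ φ ≤ 1 ∧
    Z E = (r : ℂ) * Complex.exp ((Real.pi : ℂ) * φ * Complex.I))


include hH in
lemma arg_Z {E : A} (hE : ¬ IsZero E) :
    0 < (Z E).arg ∧ (Z E).arg ≤ Real.pi ∧ Z E ≠ 0 := by
  obtain ⟨r, φ, hr, hφ, hφ1, hZE⟩ := hH E hE
  have hc : ((Real.pi : ℂ) * φ * Complex.I) = ((Real.pi * φ : ℝ) : ℂ) * Complex.I := by
    push_cast; ring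
  rw [hZE, hc]
  have hne : (r : ℂ) * Complex.exp (((Real.pi * φ : ℝ) : ℂ) * Complex.I) ≠ 0 :=
    mul_ne_zero (by exact_mod_cast hr.ne') (Complex.exp_ne_zero _)
  have harg : ((r : ℂ) * Complex.exp (((Real.pi * φ : ℝ) : ℂ) * Complex.I)).arg = Real.pi * φ := by
    rw [Complex.arg_real_mul _ hr, Complex.exp_mul_I]
    exact Complex.arg_cos_add_sin_mul_I
      ⟨by nlinarith [Real.pi_pos], by nlinarith [Real.pi_pos]⟩
  rw [harg]
  exact ⟨by positivity, by nlinarith [Real.pi_pos], hne⟩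

/-- The key subobject-cone predicate. -/
def GoodQ (Z : A → ℂ) (a : ℝ) (B : A) : Prop :=
  ∀ (X : A) (u : X ⟶ B), Mono u → Qc a (Z X)

omit hadd hH in
lemma goodQ_of_iso {a : ℝ} {B B' : A} (e : B ≅ B') (h : GoodQ Z a B) : GoodQ Z a B' := by
  intro X u hu
  haveI := hu
  exact h X (u ≫ e.inv) inferInstance

omit hH in
include hadd in
lemma goodQ_zero {a : ℝ} {B : A} (hB : IsZero B) : GoodQ Z a B := by
  intro X u hu
  haveI := hu
  exact Or.inl (Z_isZero hadd (isZero_of_mono_into_zero u hB))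

include hadd in
omit hH in
lemma goodQ_ext {a : ℝ} (ha : 0 < a) (hπ : a ≤ Real.pi) (S : ShortComplex A)
    (hS : S.ShortExact) (h1 : GoodQ Z a S.X₁) (h3 : GoodQ Z a S.X₃) : GoodQ Z a S.X₂ := by
  intro X u hu
  haveI := hu
  set g := u ≫ S.g with hg
  have hw : (kernel.ι g ≫ u) ≫ S.g = 0 := by
    rw [Category.assoc, ← hg, kernel.condition]
  obtain ⟨k, hk⟩ := KernelFork.IsLimit.lift' hS.fIsKernel (kernel.ι g ≫ u) hw
  simp only [Fork.ι_ofι] at hk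
  have hmonok : Mono k := by
    have : Mono (k ≫ S.f) := by rw [hk]; exact mono_comp _ _
    exact mono_of_mono k S.f
  have q1 : Qc a (Z (kernel g)) := h1 _ k hmonok
  have e2 : Z X = Z (kernel g) + Z (Abelian.coimage g) := Z_mono hadd (kernel.ι g)
  have q2 : Qc a (Z (Abelian.coimage g)) := by
    rw [Z_iso hadd (Abelian.coimageIsoImage g)]
    exact h3 _ (Abelian.image.ι g) inferInstance
  rw [e2]
  exact Qc_add ha hπ q1 q2

include hadd hH in
lemma goodQ_semistable {a : ℝ} {E : A} (hs : IsSemistable Z E)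
    (haE : (Z E).arg ≤ a) : GoodQ Z a E := by
  obtain ⟨h1, h2⟩ := hs
  intro X u hu
  by_cases hX : IsZero X
  · exact Or.inl (Z_isZero hadd hX)
  · right
    obtain ⟨hpos, _, _⟩ := arg_Z hH hX
    refine ⟨hpos, ?_⟩
    have hle := h2 X u hu hX
    unfold phase at hle
    have := (div_le_div_iff_of_pos_right Real.pi_pos).mp hle
    linarith

include hadd in
omit hH in
lemma goodQ_biproduct_fin {a : ℝ} (ha : 0 < a) (hπ : a ≤ Real.pi) :
    ∀ (n : ℕ) (f : Fin n → A), (∀ i, GoodQ Z a (f i)) → GoodQ Z a (⨁ f) := by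
  intro n
  induction n with
  | zero =>
      intro f _
      apply goodQ_zero hadd
      rw [IsZero.iff_id_eq_zero]
      apply biproduct.hom_ext
      intro i
      exact i.elim0
  | succ n ih =>
      intro f hf
      set e := finSuccEquiv n with he
      have hiso : (⨁ (fun o : Option (Fin n) => f (e.symm o))) ≅ ⨁ f :=
        (biproduct.whiskerEquiv e fun i => eqToIso (congrArg f (e.symm_apply_apply i))).symm
      apply goodQ_of_iso hiso
      obtain ⟨S, hS, h1, h2, h3⟩ := optionSES (A := A) (fun o : Option (Fin n) => f (e.symm o))
      have g1 : GoodQ Z a S.X₁ := by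
        rw [h1]; exact ih _ (fun i => hf _)
      have g3 : GoodQ Z a S.X₃ := by
        rw [h3]; exact hf _
      have := goodQ_ext hadd ha hπ S hS g1 g3
      rwa [h2] at this

include hadd in
omit hH in
lemma goodQ_biproduct {ι : Type} [Fintype ι] {a : ℝ} (ha : 0 < a) (hπ : a ≤ Real.pi)
    (f : ι → A) (hf : ∀ i, GoodQ Z a (f i)) : GoodQ Z a (⨁ f) := by
  set e := Fintype.equivFin ι with he
  have hiso : (⨁ (fun j : Fin (Fintype.card ι) => f (e.symm j))) ≅ ⨁ f :=
    (biproduct.whiskerEquiv e fun i => eqToIso (congrArg f (e.symm_apply_apply i))).symm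
  exact goodQ_of_iso hiso (goodQ_biproduct_fin hadd ha hπ _ _ (fun j => hf _))

end Stab

section HN
variable {Z : A → ℂ}
variable (hadd : ∀ S : ShortComplex A, S.ShortExact → Z S.X₂ = Z S.X₁ + Z S.X₃)
variable (hH : ∀ E : A, ¬ IsZero E → ∃ r φ : ℝ, 0 < r ∧ 0 < φ ∧ φ ≤ 1 ∧
    Z E = (r : ℂ) * Complex.exp ((Real.pi : ℂ) * φ * Complex.I))

include hadd in
omit hH in
lemma semistable_of_iso {X Y : A} (e : X ≅ Y) (h : IsSemistable Z X) : IsSemistable Z Y := by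
  obtain ⟨h1, h2⟩ := h
  refine ⟨fun hY => h1 (hY.of_iso e), fun W u hu hW => ?_⟩
  haveI := hu
  have := h2 W (u ≫ e.inv) inferInstance hW
  have hZ : Z X = Z Y := Z_iso hadd e
  unfold phase at this ⊢
  rwa [hZ] at this

omit hadd hH in
lemma arg_eq_of_phase_eq {X Y : A} (h : phase Z X = phase Z Y) : (Z X).arg = (Z Y).arg := by
  unfold phase at h
  have := congrArg (fun t => t * Real.pi) h
  field_simp at this
  exact this

include hadd hH in
lemma hn_good {Y : A} (h : HNFiltAb Z Y) :
    GoodQ Z ((Z (cokernel (h.f ⟨0, h.npos⟩))).arg) Y := by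
  set i0 : Fin h.n := ⟨0, h.npos⟩ with hi0
  set a := (Z (cokernel (h.f i0))).arg with haa
  obtain ⟨ha1, ha2, -⟩ := arg_Z hH (h.quot_ne i0)
  have key : ∀ j : ℕ, (hj : j ≤ h.n) → GoodQ Z a (h.Fil ⟨j, Nat.lt_succ_of_le hj⟩) := by
    intro j
    induction j with
    | zero =>
        intro hj
        apply goodQ_zero hadd
        have h0 : (⟨0, Nat.lt_succ_of_le hj⟩ : Fin (h.n + 1)) = 0 := by
          apply Fin.ext; simp
        rw [h0]
        exact h.fil_zero
    | succ j ih =>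
        intro hj
        have hjn : j < h.n := hj
        haveI := h.mono ⟨j, hjn⟩
        have hS : (ShortComplex.mk (h.f ⟨j, hjn⟩) (cokernel.π (h.f ⟨j, hjn⟩))
            (cokernel.condition _)).ShortExact :=
          { exact := ShortComplex.exact_of_g_is_cokernel _ (cokernelIsCokernel _) }
        have g1 : GoodQ Z a (h.Fil (Fin.castSucc ⟨j, hjn⟩)) := ih (Nat.le_of_succ_le hj)
        have g3 : GoodQ Z a (cokernel (h.f ⟨j, hjn⟩)) := by
          apply goodQ_semistable hadd hH (h.quot_ss ⟨j, hjn⟩)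
          have hph : phase Z (cokernel (h.f ⟨j, hjn⟩)) ≤ phase Z (cokernel (h.f i0)) :=
            h.quot_anti.antitone (by rw [hi0]; exact Fin.mk_le_mk.mpr (Nat.zero_le j))
          unfold phase at hph
          exact (div_le_div_iff_of_pos_right Real.pi_pos).mp hph
        exact goodQ_ext hadd ha1 ha2 _ hS g1 g3
  have hlast := key h.n (le_refl _)
  obtain ⟨e⟩ := h.fil_last
  exact goodQ_of_iso e hlast

omit hH in
lemma hn_first_mono {Y : A} (h : HNFiltAb Z Y) :
    ∃ m : h.Fil ⟨1, Nat.succ_lt_succ h.npos⟩ ⟶ h.Fil (Fin.last h.n), Mono m := by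
  have key : ∀ j : ℕ, 1 ≤ j → (hj : j ≤ h.n) →
      ∃ m : h.Fil ⟨1, Nat.succ_lt_succ h.npos⟩ ⟶ h.Fil ⟨j, Nat.lt_succ_of_le hj⟩, Mono m := by
    intro j
    induction j with
    | zero => intro h1; exact absurd h1 (by simp)
    | succ j ih =>
        intro _ hj
        by_cases hj0 : j = 0
        · subst hj0
          exact ⟨𝟙 _, inferInstance⟩
        · obtain ⟨m, hm⟩ := ih (Nat.one_le_iff_ne_zero.mpr hj0) (Nat.le_of_succ_le hj)
          haveI := hm
          haveI := h.mono ⟨j, hj⟩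
          exact ⟨m ≫ h.f ⟨j, hj⟩, mono_comp _ _⟩
  exact key h.n h.npos (le_refl _)

end HN

end Aux


/-- Let `p^* : C → D` be an exact faithful functor of abelian
categories, `p_* : D → C` exact, and `G` a finite group of order `d` acting on `D` by
exact autoequivalences, with natural isomorphisms `p_* ∘ p^* ≅ (-)^{⊕d}` and
`p^* ∘ p_* ≅ ⊕_{g ∈ G} g^*`.  Let `Z` be a stability function on `D` with the
Harder–Narasimhan property whose semistable objects of any given phase are preserved
by every `g^*`.  Then `Z ∘ p^*` is a stability function on `C`, a nonzero object `E`
is `(Z ∘ p^*)`-semistable iff `p^* E` is `Z`-semistable, and in that case the phases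
agree. -/
theorem statement_13
    {C : Type u} [Category.{v} C] [Abelian C] {D : Type u₂} [Category.{v₂} D] [Abelian D]
    {G : Type} [Group G] [Fintype G]
    (pstar : C ⥤ D) [PreservesFiniteLimits pstar] [PreservesFiniteColimits pstar]
    [pstar.Faithful]
    (plow : D ⥤ C) [PreservesFiniteLimits plow] [PreservesFiniteColimits plow]
    (gst : G → D ⥤ D) [∀ g : G, PreservesFiniteLimits (gst g)]
    [∀ g : G, PreservesFiniteColimits (gst g)] [∀ g : G, (gst g).IsEquivalence]
    (actOne : gst 1 ≅ 𝟭 D) (actMul : ∀ g h : G, gst h ⋙ gst g ≅ gst (g * h))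
    (ppIso : ∀ E : C, plow.obj (pstar.obj E) ≅ ⨁ (fun _ : G => E))
    (ppNat : ∀ {E F : C} (f : E ⟶ F),
      plow.map (pstar.map f) ≫ (ppIso F).hom = (ppIso E).hom ≫ biproduct.map (fun _ => f))
    (qpIso : ∀ X : D, pstar.obj (plow.obj X) ≅ ⨁ (fun g : G => (gst g).obj X))
    (qpNat : ∀ {X Y : D} (f : X ⟶ Y),
      pstar.map (plow.map f) ≫ (qpIso Y).hom = (qpIso X).hom ≫ biproduct.map (fun g => (gst g).map f))
    (Z : D → ℂ) (hZ : IsStabilityFunction Z) (hHN : HNProperty Z)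
    (hsemi : ∀ (g : G) (E : D), IsSemistable Z E →
      IsSemistable Z ((gst g).obj E) ∧ phase Z ((gst g).obj E) = phase Z E) :
    IsStabilityFunction (fun E => Z (pstar.obj E)) ∧
    ∀ E : C, ¬ IsZero E →
      ((IsSemistable (fun X => Z (pstar.obj X)) E ↔ IsSemistable Z (pstar.obj E)) ∧
        (IsSemistable (fun X => Z (pstar.obj X)) E →
          phase (fun X => Z (pstar.obj X)) E = phase Z (pstar.obj E))) := by
  have hadd_C : ∀ S : ShortComplex C, S.ShortExact →
      Z (pstar.obj S.X₂) = Z (pstar.obj S.X₁) + Z (pstar.obj S.X₃) := by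
    intro S hS
    exact hZ.1 (S.map pstar) (hS.map_of_exact pstar)
  have reflZ : ∀ X : C, IsZero (pstar.obj X) → IsZero X := by
    intro X hX
    rw [IsZero.iff_id_eq_zero, ← Functor.map_eq_zero_iff pstar, pstar.map_id]
    exact hX.eq_of_src _ _
  have hH_C : ∀ E : C, ¬ IsZero E → ∃ r φ : ℝ, 0 < r ∧ 0 < φ ∧ φ ≤ 1 ∧
      Z (pstar.obj E) = (r : ℂ) * Complex.exp ((Real.pi : ℂ) * φ * Complex.I) := by
    intro E hE
    exact hZ.2 _ (fun hz => hE (reflZ E hz))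
  refine ⟨⟨hadd_C, hH_C⟩, ?_⟩
  intro E hE
  have hPE : ¬ IsZero (pstar.obj E) := fun hz => hE (reflZ E hz)
  have easy : IsSemistable Z (pstar.obj E) → IsSemistable (fun X => Z (pstar.obj X)) E := by
    intro hss
    refine ⟨hE, ?_⟩
    intro X u hu hX
    haveI := hu
    haveI : Mono (pstar.map u) := preserves_mono_of_preservesLimit pstar u
    have hXne : ¬ IsZero (pstar.obj X) := fun hz => hX (reflZ X hz)
    exact hss.2 (pstar.obj X) (pstar.map u) inferInstance hXne
  have hard : IsSemistable (fun X => Z (pstar.obj X)) E → IsSemistable Z (pstar.obj E) := by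
    intro hss
    obtain ⟨hn⟩ := hHN (pstar.obj E) hPE
    set i0 : Fin hn.n := ⟨0, hn.npos⟩ with hi0
    set amax := (Z (cokernel (hn.f i0))).arg with hamax
    obtain ⟨hA1pos, hA2pi, -⟩ := arg_Z hZ.2 (hn.quot_ne i0)
    have hgood : GoodQ Z amax (pstar.obj E) := hn_good hZ.1 hZ.2 hn
    set A1 := hn.Fil ⟨1, Nat.succ_lt_succ hn.npos⟩ with hA1def
    obtain ⟨m1, hm1⟩ := hn_first_mono hn
    obtain ⟨eL⟩ := hn.fil_last
    have hcs : Fin.castSucc i0 = 0 := by apply Fin.ext; simp [hi0]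
    have hzsrc : IsZero (hn.Fil (Fin.castSucc i0)) := by rw [hcs]; exact hn.fil_zero
    have hf0 : hn.f i0 = 0 := hzsrc.eq_of_src _ _
    have eA : cokernel (hn.f i0) ≅ A1 := (cokernelIsoOfEq hf0).trans cokernelZeroIsoTarget
    have ssA : IsSemistable Z A1 := semistable_of_iso hZ.1 eA (hn.quot_ss i0)
    have hZA : Z (cokernel (hn.f i0)) = Z A1 := Z_iso hZ.1 eA
    have hargA : (Z A1).arg = amax := by rw [hamax, hZA]
    have hWne : ¬ IsZero (plow.obj A1) := by
      intro hzW
      have h1 : IsZero (pstar.obj (plow.obj A1)) := pstar.map_isZero hzW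
      have h2 : IsZero (⨁ fun g : G => (gst g).obj A1) := h1.of_iso (qpIso A1).symm
      have h3 : IsZero ((gst (1 : G)).obj A1) := isZero_component _ h2 _
      exact ((hsemi 1 A1 ssA).1).1 h3
    have hargW : (Z (pstar.obj (plow.obj A1))).arg = amax := by
      rw [Z_iso hZ.1 (qpIso A1), Z_biproduct hZ.1]
      apply arg_sum ⟨by linarith [Real.pi_pos], hA2pi⟩
      · intro g
        obtain ⟨-, -, hne⟩ := arg_Z hZ.2 ((hsemi g A1 ssA).1).1
        exact hne
      · intro g
        have hp := arg_eq_of_phase_eq (Z := Z) ((hsemi g A1 ssA).2)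
        rw [hp, hargA]
    haveI : Mono m1 := hm1
    haveI : Mono (m1 ≫ eL.hom) := mono_comp _ _
    haveI : Mono (plow.map (m1 ≫ eL.hom)) := preserves_mono_of_preservesLimit plow _
    have hmonoW : Mono (plow.map (m1 ≫ eL.hom) ≫ (ppIso E).hom) := mono_comp _ _
    obtain ⟨hb1, hb2, -⟩ := arg_Z hH_C hE
    have hgoodC : GoodQ (fun X : C => Z (pstar.obj X)) ((Z (pstar.obj E)).arg)
        (⨁ fun _ : G => E) := by
      apply goodQ_biproduct hadd_C hb1 hb2
      intro _
      exact goodQ_semistable hadd_C hH_C hss (le_refl _)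
    have hq := hgoodC (plow.obj A1) (plow.map (m1 ≫ eL.hom) ≫ (ppIso E).hom) hmonoW
    have hle : amax ≤ (Z (pstar.obj E)).arg := by
      rcases hq with h0 | ⟨-, hle⟩
      · obtain ⟨-, -, hne⟩ := arg_Z hH_C hWne
        exact absurd h0 hne
      · rwa [hargW] at hle
    refine ⟨hPE, ?_⟩
    intro X u hu hX
    rcases hgood X u hu with h0 | ⟨-, hX2⟩
    · obtain ⟨-, -, hne⟩ := arg_Z hZ.2 hX
      exact absurd h0 hne
    · unfold phase
      exact (div_le_div_iff_of_pos_right Real.pi_pos).mpr (le_trans hX2 hle)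
  exact ⟨⟨hard, easy⟩, fun _ => rfl⟩

end StabilityPaper
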